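/- If G and H are finite groups of coprime orders, then μ(G × H) = μ(G) + μ(H), where μ denotes the minimal faithful permutation representation degree. -/

import Mathlib

open Finset

private lemma perm_pow_fix {X : Type*} (p : Equiv.Perm X) (x : X) (h : p x = x) :
    ∀ n : ℕ, (p ^ n) x = x
  | 0 => by simp
  | n + 1 => by rw [pow_succ, Equiv.Perm.mul_apply, h, perm_pow_fix p x h n]

private lemma key_fix {K L X : Type*} [Group K] [Group L] [Finite K] [Finite L]
    (cop : Nat.Coprime (Nat.card K) (Nat.card L))
    (F : K × L →* Equiv.Perm X) (k : K) (l : L) (x : X)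
    (hfix : F (k, l) x = x) : F (k, 1) x = x := by
  have hj : ∀ j : ℕ, F ((k, l) ^ j) x = x := fun j => by
    rw [map_pow]; exact perm_pow_fix _ _ hfix j
  set n := Nat.card L with hn'
  have hpow : ((k, l) : K × L) ^ n = (k ^ n, 1) := by
    rw [Prod.pow_mk, pow_card_eq_one']
  by_cases hk1 : orderOf k = 1
  · obtain rfl : k = 1 := orderOf_eq_one_iff.mp hk1
    show F 1 x = x
    rw [map_one]; rfl
  · have hd : 1 < orderOf k := by
      have := orderOf_pos k; omega
    have cop2 : Nat.Coprime n (orderOf k) :=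
      Nat.Coprime.coprime_dvd_right (orderOf_dvd_natCard k) cop.symm
    obtain ⟨m, -, hm⟩ := Nat.exists_mul_mod_eq_one_of_coprime cop2 hd
    have hk2 : (k ^ n) ^ m = k := by
      rw [← pow_mul, ← pow_mod_orderOf, hm, pow_one]
    have h2 : F (k ^ n, 1) x = x := by rw [← hpow]; exact hj n
    have h3 : ((k ^ n, (1 : L)) : K × L) ^ m = (k, 1) := by
      rw [Prod.pow_mk, hk2, one_pow]
    rw [← h3, map_pow]
    exact perm_pow_fix _ _ h2 m

open scoped Classical in
private lemma side_bound {K L X : Type*} [Group K] [Group L] [Fintype X]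
    (ρ : K →* Equiv.Perm X) (τ : L →* Equiv.Perm X) (hρ : Function.Injective ρ)
    (hcomm : ∀ (k : K) (l : L), ρ k * τ l = τ l * ρ k)
    (hkey : ∀ (k : K) (l : L) (x : X), τ l (ρ k x) = x → ρ k x = x) :
    ∃ s : ℕ, (∃ f : K →* Equiv.Perm (Fin s), Function.Injective f) ∧
      (s : ℚ) = ∑ x : X, (if ∃ k, ρ k x ≠ x then
        (((Finset.univ.filter (fun y => ∃ l, τ l x = y)).card : ℚ))⁻¹ else 0) := by
  classical
  have hsymm : ∀ x y : X, (∃ l, τ l x = y) → ∃ l, τ l y = x := by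
    rintro x y ⟨l, rfl⟩
    exact ⟨l⁻¹, by rw [← Equiv.Perm.mul_apply, ← map_mul, inv_mul_cancel, map_one,
      Equiv.Perm.one_apply]⟩
  letI S : Setoid X :=
    ⟨fun x y => ∃ l, τ l x = y,
     ⟨fun x => ⟨1, by simp⟩,
      fun {x y} h => hsymm x y h,
      fun {x y z} => by
        rintro ⟨l, rfl⟩ ⟨l', rfl⟩
        exact ⟨l' * l, by rw [map_mul, Equiv.Perm.mul_apply]⟩⟩⟩
  have hcond : ∀ (k : K) (a b : X), S.r a b ↔ S.r (ρ k a) (ρ k b) := by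
    intro k a b
    constructor
    · rintro ⟨l, rfl⟩
      exact ⟨l, by rw [← Equiv.Perm.mul_apply, ← hcomm, Equiv.Perm.mul_apply]⟩
    · rintro ⟨l, hl⟩
      refine ⟨l, (ρ k).injective ?_⟩
      rw [← Equiv.Perm.mul_apply, hcomm, Equiv.Perm.mul_apply, hl]
  let π : K →* Equiv.Perm (Quotient S) :=
    { toFun := fun k => Quotient.congr (ρ k) (hcond k)
      map_one' := by
        ext q
        induction q using Quotient.ind with
        | _ x =>
          show (⟦ρ 1 x⟧ : Quotient S) = ⟦x⟧
          rw [map_one]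
          rfl
      map_mul' := by
        intro k k'
        ext q
        induction q using Quotient.ind with
        | _ x =>
          show (⟦ρ (k * k') x⟧ : Quotient S) = ⟦ρ k (ρ k' x)⟧
          rw [map_mul, Equiv.Perm.mul_apply] }
  have hπmk : ∀ (k : K) (x : X), π k ⟦x⟧ = ⟦ρ k x⟧ := fun k x =>
    Quotient.congr_mk (ρ k) (hcond k) x
  have hfix_iff : ∀ (k : K) (x : X), π k ⟦x⟧ = ⟦x⟧ ↔ ρ k x = x := by
    intro k x
    constructor
    · intro h
      have h' : (⟦ρ k x⟧ : Quotient S) = ⟦x⟧ := (hπmk k x).symm.trans h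
      obtain ⟨l, hl⟩ := Quotient.exact h'
      exact hkey k l x hl
    · intro h
      rw [hπmk, h]
  have hmoved : ∀ x : X, (∃ k, π k ⟦x⟧ ≠ ⟦x⟧) ↔ ∃ k, ρ k x ≠ x :=
    fun x => exists_congr fun k => (hfix_iff k x).not
  set Pm : Quotient S → Prop := fun q => ∃ k, π k q ≠ q with hPm
  set sF : Finset (Quotient S) := Finset.univ.filter Pm with hsF
  refine ⟨sF.card, ?_, ?_⟩
  · -- the faithful representation on the support
    have hconj : ∀ (k k' : K) (q : Quotient S),
        π (k * k' * k⁻¹) (π k q) = π k (π k' q) := by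
      intro k k' q
      rw [← Equiv.Perm.mul_apply, ← map_mul, inv_mul_cancel_right, map_mul,
        Equiv.Perm.mul_apply]
    have hinv : ∀ (k : K) (q : Quotient S), Pm q → Pm (π k q) := by
      rintro k q ⟨k', hk'⟩
      exact ⟨k * k' * k⁻¹, fun hcon => hk' ((π k).injective (by rwa [hconj] at hcon))⟩
    have hinv' : ∀ (k : K) (q : Quotient S), Pm q ↔ Pm (π k q) := by
      intro k q
      refine ⟨hinv k q, fun h => ?_⟩
      have h2 := hinv k⁻¹ _ h
      rwa [← Equiv.Perm.mul_apply, ← map_mul, inv_mul_cancel, map_one,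
        Equiv.Perm.one_apply] at h2
    have hmem : ∀ (k : K) (q : Quotient S), q ∈ sF ↔ π k q ∈ sF := by
      intro k q
      simp only [hsF, Finset.mem_filter, Finset.mem_univ, true_and]
      exact hinv' k q
    let π' : K →* Equiv.Perm {q : Quotient S // q ∈ sF} :=
      { toFun := fun k => (π k).subtypePerm (fun q => (hmem k q).symm)
        map_one' := by
          ext q
          simp [Equiv.Perm.subtypePerm_apply]
        map_mul' := by
          intro k k'
          ext q
          simp [Equiv.Perm.subtypePerm_apply]
          rfl }
    have hπ'inj : Function.Injective π' := by
      rw [injective_iff_map_eq_one]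
      intro k hk
      have hfixall : ∀ x : X, ρ k x = x := by
        intro x
        rw [← hfix_iff k x]
        by_cases hq : (⟦x⟧ : Quotient S) ∈ sF
        · have h3 := congrArg (fun p : Equiv.Perm {q : Quotient S // q ∈ sF} =>
            ((p ⟨⟦x⟧, hq⟩ : {q : Quotient S // q ∈ sF}) : Quotient S)) hk
          simpa [π', Equiv.Perm.subtypePerm_apply] using h3
        · simp only [hsF, Finset.mem_filter, Finset.mem_univ, true_and, hPm,
            not_exists, not_not] at hq
          exact hq k
      apply hρ
      rw [map_one]
      exact Equiv.ext hfixall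
    let e : {q : Quotient S // q ∈ sF} ≃ Fin sF.card := sF.equivFin
    let ce : Equiv.Perm {q : Quotient S // q ∈ sF} →* Equiv.Perm (Fin sF.card) :=
      { toFun := fun p => e.permCongr p
        map_one' := by ext i; simp
        map_mul' := by intro p p'; ext i; simp }
    exact ⟨ce.comp π', fun p p' h => hπ'inj (e.permCongr.injective h)⟩
  · -- the counting identity
    have horb : ∀ x : X, Finset.univ.filter (fun y => ∃ l, τ l x = y)
        = Finset.univ.filter (fun y : X => (⟦y⟧ : Quotient S) = ⟦x⟧) := by
      intro x
      ext y
      simp only [Finset.mem_filter, Finset.mem_univ, true_and]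
      constructor
      · intro h
        exact Quotient.sound (hsymm x y h)
      · intro h
        exact hsymm y x (Quotient.exact h)
    have hfiber_pos : ∀ q : Quotient S,
        0 < (Finset.univ.filter (fun y : X => (⟦y⟧ : Quotient S) = q)).card := by
      intro q
      induction q using Quotient.ind with
      | _ x =>
        exact Finset.card_pos.mpr ⟨x, Finset.mem_filter.mpr ⟨Finset.mem_univ x, rfl⟩⟩
    set W : Quotient S → ℚ := fun q =>
      if Pm q then ((Finset.univ.filter (fun y : X => (⟦y⟧ : Quotient S) = q)).card : ℚ)⁻¹
      else 0 with hW
    have hWx : ∀ x : X, (if ∃ k, ρ k x ≠ x then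
        (((Finset.univ.filter (fun y => ∃ l, τ l x = y)).card : ℚ))⁻¹ else 0) = W ⟦x⟧ := by
      intro x
      rw [horb x, hW]
      exact if_congr (hmoved x).symm rfl rfl
    calc (sF.card : ℚ) = ∑ q : Quotient S, if Pm q then (1 : ℚ) else 0 := by
          rw [Finset.sum_boole]
      _ = ∑ q : Quotient S,
            ∑ _x ∈ Finset.univ.filter (fun x : X => (⟦x⟧ : Quotient S) = q), W q := by
          refine Finset.sum_congr rfl fun q _ => ?_
          rw [Finset.sum_const, nsmul_eq_mul]
          by_cases h : Pm q
          · rw [hW]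
            simp only [h, if_true]
            rw [mul_inv_cancel₀]
            exact Nat.cast_ne_zero.mpr (hfiber_pos q).ne'
          · simp [hW, h]
      _ = ∑ q : Quotient S,
            ∑ x ∈ Finset.univ.filter (fun x : X => (⟦x⟧ : Quotient S) = q), W ⟦x⟧ := by
          refine Finset.sum_congr rfl fun q _ => Finset.sum_congr rfl fun x hx => ?_
          rw [(Finset.mem_filter.mp hx).2]
      _ = ∑ x : X, W ⟦x⟧ := Finset.sum_fiberwise _ _ _
      _ = _ := (Finset.sum_congr rfl fun x _ => (hWx x).symm)

private lemma rat_aux (P P' : Prop) [Decidable P] [Decidable P'] (A B : ℕ)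
    (hA1 : 1 ≤ A) (hB1 : 1 ≤ B) (hA2 : P' → 2 ≤ A) (hB2 : P → 2 ≤ B) :
    (if P then (A : ℚ)⁻¹ else 0) + (if P' then (B : ℚ)⁻¹ else 0) ≤ 1 := by
  have hA0 : (0 : ℚ) < A := by exact_mod_cast hA1
  have hB0 : (0 : ℚ) < B := by exact_mod_cast hB1
  have hA1' : (A : ℚ)⁻¹ ≤ 1 := by
    rw [inv_eq_one_div, div_le_one hA0]
    exact_mod_cast hA1
  have hB1' : (B : ℚ)⁻¹ ≤ 1 := by
    rw [inv_eq_one_div, div_le_one hB0]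
    exact_mod_cast hB1
  by_cases hP : P <;> by_cases hP' : P' <;>
    simp only [hP, hP', if_true, if_false]
  · have h2A : (2 : ℚ) ≤ A := by exact_mod_cast hA2 hP'
    have h2B : (2 : ℚ) ≤ B := by exact_mod_cast hB2 hP
    have hA2' : (A : ℚ)⁻¹ ≤ 2⁻¹ := by
      rw [inv_eq_one_div, inv_eq_one_div]
      exact one_div_le_one_div_of_le (by norm_num) h2A
    have hB2' : (B : ℚ)⁻¹ ≤ 2⁻¹ := by
      rw [inv_eq_one_div, inv_eq_one_div]
      exact one_div_le_one_div_of_le (by norm_num) h2B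
    linarith
  · simpa using hA1'
  · simpa using hB1'
  · norm_num

theorem mu_prod_eq_of_coprime (G H : Type*) [Group G] [Group H] [Finite G] [Finite H]
    (hcop : Nat.Coprime (Nat.card G) (Nat.card H)) (a b c : ℕ)
    (ha : IsLeast {n : ℕ | ∃ f : G →* Equiv.Perm (Fin n), Function.Injective f} a)
    (hb : IsLeast {n : ℕ | ∃ f : H →* Equiv.Perm (Fin n), Function.Injective f} b)
    (hc : IsLeast {n : ℕ | ∃ f : G × H →* Equiv.Perm (Fin n), Function.Injective f} c) :
    c = a + b := by
  classical
  obtain ⟨fa, hfa⟩ := ha.1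
  obtain ⟨fb, hfb⟩ := hb.1
  obtain ⟨fc, hfc⟩ := hc.1
  -- upper bound : c ≤ a + b
  have hupper : c ≤ a + b := by
    apply hc.2
    let e := finSumFinEquiv (m := a) (n := b)
    let ce : Equiv.Perm (Fin a ⊕ Fin b) →* Equiv.Perm (Fin (a + b)) :=
      { toFun := fun p => e.permCongr p
        map_one' := by ext i; simp
        map_mul' := by intro p q; ext i; simp }
    refine ⟨ce.comp ((Equiv.Perm.sumCongrHom (Fin a) (Fin b)).comp (fa.prodMap fb)), ?_⟩
    have h1 : Function.Injective (fa.prodMap fb) := by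
      intro p q h
      rw [MonoidHom.prodMap] at h
      have h1 := congrArg Prod.fst h
      have h2 := congrArg Prod.snd h
      exact Prod.ext (hfa h1) (hfb h2)
    exact fun p q h =>
      h1 (Equiv.Perm.sumCongrHom_injective (e.permCongr.injective h))
  -- the two commuting actions on `Fin c`
  set ρG : G →* Equiv.Perm (Fin c) := fc.comp (MonoidHom.inl G H) with hρG
  set τH : H →* Equiv.Perm (Fin c) := fc.comp (MonoidHom.inr G H) with hτH
  have happly : ∀ (g : G) (h : H), ρG g * τH h = fc (g, h) := by
    intro g h
    rw [hρG, hτH]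
    simp only [MonoidHom.comp_apply, MonoidHom.inl_apply, MonoidHom.inr_apply]
    rw [← map_mul]
    congr 1
    simp
  have happly' : ∀ (g : G) (h : H), τH h * ρG g = fc (g, h) := by
    intro g h
    rw [hρG, hτH]
    simp only [MonoidHom.comp_apply, MonoidHom.inl_apply, MonoidHom.inr_apply]
    rw [← map_mul]
    congr 1
    simp
  have hcommGH : ∀ (g : G) (h : H), ρG g * τH h = τH h * ρG g := by
    intro g h; rw [happly, happly']
  have hρinj : Function.Injective ρG := by
    intro g g' h
    have := hfc h
    exact congrArg Prod.fst this
  have hτinj : Function.Injective τH := by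
    intro h h' hh
    have := hfc hh
    exact congrArg Prod.snd this
  have hkeyG : ∀ (g : G) (h : H) (x : Fin c), τH h (ρG g x) = x → ρG g x = x := by
    intro g h x hx
    have h2 : fc (g, h) x = x := by
      rw [← happly', Equiv.Perm.mul_apply]
      exact hx
    have h3 := key_fix hcop fc g h x h2
    simpa [hρG] using h3
  have hkeyH : ∀ (h : H) (g : G) (x : Fin c), ρG g (τH h x) = x → τH h x = x := by
    intro h g x hx
    have h2 : (fc.comp ((MulEquiv.prodComm : H × G ≃* G × H)).toMonoidHom) (h, g) x = x := by
      have : (((MulEquiv.prodComm : H × G ≃* G × H)) (h, g) : G × H) = (g, h) := rfl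
      simp only [MonoidHom.comp_apply, MulEquiv.coe_toMonoidHom, this]
      rw [← happly, Equiv.Perm.mul_apply]
      exact hx
    have h3 := key_fix hcop.symm (fc.comp ((MulEquiv.prodComm : H × G ≃* G × H)).toMonoidHom) h g x h2
    have h4 : (((MulEquiv.prodComm : H × G ≃* G × H)) (h, 1) : G × H) = (1, h) := rfl
    simpa [MonoidHom.comp_apply, MulEquiv.coe_toMonoidHom, h4, hτH] using h3
  obtain ⟨sG, hsG1, hsG2⟩ := side_bound ρG τH hρinj hcommGH hkeyG
  obtain ⟨sH, hsH1, hsH2⟩ := side_bound τH ρG hτinj (fun h g => (hcommGH g h).symm) hkeyH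
  have haG : a ≤ sG := ha.2 hsG1
  have hbH : b ≤ sH := hb.2 hsH1
  -- pointwise bound and summation
  have hsum : (sG : ℚ) + sH ≤ c := by
    rw [hsG2, hsH2, ← Finset.sum_add_distrib]
    have hc' : (c : ℚ) = ∑ _x : Fin c, (1 : ℚ) := by simp
    rw [hc']
    refine Finset.sum_le_sum fun x _ => ?_
    refine rat_aux _ _ _ _ ?_ ?_ ?_ ?_
    · refine Finset.card_pos.mpr ⟨x, ?_⟩
      simp only [Finset.mem_filter, Finset.mem_univ, true_and]
      exact ⟨1, by simp⟩
    · refine Finset.card_pos.mpr ⟨x, ?_⟩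
      simp only [Finset.mem_filter, Finset.mem_univ, true_and]
      exact ⟨1, by simp⟩
    · rintro ⟨h, hh⟩
      refine Finset.one_lt_card.mpr ⟨x, ?_, τH h x, ?_, fun hcon => hh (hcon ▸ rfl)⟩
      · simp only [Finset.mem_filter, Finset.mem_univ, true_and]
        exact ⟨1, by simp⟩
      · simp only [Finset.mem_filter, Finset.mem_univ, true_and]
        exact ⟨h, rfl⟩
    · rintro ⟨g, hg⟩
      refine Finset.one_lt_card.mpr ⟨x, ?_, ρG g x, ?_, fun hcon => hg (hcon ▸ rfl)⟩
      · simp only [Finset.mem_filter, Finset.mem_univ, true_and]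
        exact ⟨1, by simp⟩
      · simp only [Finset.mem_filter, Finset.mem_univ, true_and]
        exact ⟨g, rfl⟩
  have hlower : a + b ≤ c := by
    have h1 : (a : ℚ) + b ≤ c := by
      refine le_trans ?_ hsum
      have : (a : ℚ) ≤ sG := by exact_mod_cast haG
      have : (b : ℚ) ≤ sH := by exact_mod_cast hbH
      gcongr <;> assumption
    exact_mod_cast h1
  omega
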